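/- On ℝ^{n+1}, let C be a continuous proper cone distribution and let F be a fundamental function for C with F(x,v) > 0 whenever v ∈ Int C_x. Let p, q ∈ ℝ^{n+1} with finite Lorentz–Finsler distance d(p,q), and assume that for every R < d(p,q) there exists a piecewise C¹ curve x : [0,1] → ℝ^{n+1} from p to q with x'(t) ∈ Int C_{x(t)} for all t and ℓ(x) > R. Let Γ = (γ, z) : [0,1] → ℝ^{n+1} × ℝ be a Lipschitz curve with γ(0) = p, γ(1) = q, and γ'(t) ∈ C_{γ(t)} and |z'(t)| ≤ F(γ(t),γ'(t)) for almost every t (i.e. Γ is a continuous causal curve for the product cone structure C^×). If Γ is achronal, then γ is a maximizing causal curve: ℓ(γ) = d(p,q). -/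

import Mathlib

open MeasureTheory Set

/-- A (continuous) causal curve for the cone distribution `C`: a Lipschitz curve
`γ : [a,b] → E` whose derivative exists and lies in `C (γ t)` for almost every `t`. -/
def IsCausalCurve {E : Type*} [NormedAddCommGroup E] [NormedSpace ℝ E]
    (C : E → Set E) (γ : ℝ → E) (a b : ℝ) : Prop :=
  (∃ K : NNReal, LipschitzOnWith K γ (Set.Icc a b)) ∧
  ∀ᵐ t ∂(volume.restrict (Set.Icc a b)),
    HasDerivWithinAt γ (derivWithin γ (Set.Icc a b) t) (Set.Icc a b) t ∧
    derivWithin γ (Set.Icc a b) t ∈ C (γ t)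

/-- The Lorentz–Finsler length `ℓ(γ) = ∫_a^b F (γ t) (γ' t) dt` of a curve. -/
noncomputable def curveLength {E : Type*} [NormedAddCommGroup E] [NormedSpace ℝ E]
    (F : E → E → ℝ) (γ : ℝ → E) (a b : ℝ) : ℝ :=
  ∫ t in Set.Icc a b, F (γ t) (derivWithin γ (Set.Icc a b) t)

/-- `x : [0,1] → E` is piecewise `C¹` and timelike with respect to the partition
`0 = τ 0 < τ 1 < ⋯ < τ (m+1) = 1`: on each piece it is `C¹` with derivative in the
interior of the cone. -/
def IsPiecewiseTimelike {E : Type*} [NormedAddCommGroup E] [NormedSpace ℝ E]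
    (C : E → Set E) (x : ℝ → E) (m : ℕ) (τ : Fin (m + 2) → ℝ) : Prop :=
  StrictMono τ ∧ τ 0 = 0 ∧ τ (Fin.last (m + 1)) = 1 ∧
  ∀ i : Fin (m + 1),
    ContDiffOn ℝ 1 x (Set.Icc (τ i.castSucc) (τ i.succ)) ∧
    ∀ t ∈ Set.Icc (τ i.castSucc) (τ i.succ),
      derivWithin x (Set.Icc (τ i.castSucc) (τ i.succ)) t ∈ interior (C (x t))

/-- The length of a piecewise `C¹` curve, computed piece by piece. -/
noncomputable def piecewiseLength {E : Type*} [NormedAddCommGroup E] [NormedSpace ℝ E]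
    (F : E → E → ℝ) (x : ℝ → E) (m : ℕ) (τ : Fin (m + 2) → ℝ) : ℝ :=
  ∑ i : Fin (m + 1), ∫ t in Set.Icc (τ i.castSucc) (τ i.succ),
    F (x t) (derivWithin x (Set.Icc (τ i.castSucc) (τ i.succ)) t)

/-- A product timelike curve `Λ = (lam, w) : [0,1] → E × ℝ` for the product cone
structure `C^×`: piecewise `C¹` with `lam' ∈ Int C` and `|w'| < F (lam, lam')`. -/
def IsProductTimelike {E : Type*} [NormedAddCommGroup E] [NormedSpace ℝ E]
    (C : E → Set E) (F : E → E → ℝ) (lam : ℝ → E) (w : ℝ → ℝ) : Prop :=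
  ∃ (m : ℕ) (τ : Fin (m + 2) → ℝ), StrictMono τ ∧ τ 0 = 0 ∧ τ (Fin.last (m + 1)) = 1 ∧
    ∀ i : Fin (m + 1),
      ContDiffOn ℝ 1 lam (Set.Icc (τ i.castSucc) (τ i.succ)) ∧
      ContDiffOn ℝ 1 w (Set.Icc (τ i.castSucc) (τ i.succ)) ∧
      ∀ t ∈ Set.Icc (τ i.castSucc) (τ i.succ),
        derivWithin lam (Set.Icc (τ i.castSucc) (τ i.succ)) t ∈ interior (C (lam t)) ∧
        |derivWithin w (Set.Icc (τ i.castSucc) (τ i.succ)) t| <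
          F (lam t) (derivWithin lam (Set.Icc (τ i.castSucc) (τ i.succ)) t)


/-- Monotone FTC inequality via Stieltjes measures. -/
lemma aux_monotone_integral_le {u : ℝ → ℝ} (hu : Monotone u) (hcont : Continuous u)
    {g : ℝ → ℝ} (hg : ∀ᵐ t ∂(volume.restrict (Set.Icc (0:ℝ) 1)), HasDerivAt u (g t) t) :
    ∫ t in Set.Icc (0:ℝ) 1, g t ≤ u 1 - u 0 := by
  set f : StieltjesFunction ℝ :=
    ⟨u, hu, fun x => (hcont.continuousAt).continuousWithinAt⟩ with hfdef
  have hfu : (f : ℝ → ℝ) = u := rfl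
  have hae := f.ae_hasDerivAt
  have hgg : (fun t => g t) =ᵐ[volume.restrict (Set.Icc (0:ℝ) 1)]
      (fun t => (Measure.rnDeriv f.measure volume t).toReal) := by
    filter_upwards [hg, ae_restrict_of_ae hae] with t h1 h2
    exact h1.unique h2
  rw [integral_congr_ae hgg]
  have hIcc : f.measure (Set.Icc (0:ℝ) 1) ≠ ⊤ := by
    rw [f.measure_Icc]; exact ENNReal.ofReal_ne_top
  refine (Measure.setIntegral_toReal_rnDeriv_le hIcc).trans ?_
  rw [measureReal_def, f.measure_Icc, hfu]
  have hl : Function.leftLim u 0 = u 0 :=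
    leftLim_eq_of_tendsto
      ((hcont.tendsto 0).mono_left nhdsWithin_le_nhds)
  rw [hl]
  rw [ENNReal.toReal_ofReal (sub_nonneg.mpr (hu zero_le_one))]

/-- FTC equality for Lipschitz functions with a.e. derivative on `[0,1]`. -/
lemma aux_lip_integral_eq {K : NNReal} {z : ℝ → ℝ} {g : ℝ → ℝ}
    (hz : LipschitzOnWith K z (Set.Icc 0 1))
    (hae : ∀ᵐ t ∂(volume.restrict (Set.Icc (0:ℝ) 1)),
      HasDerivWithinAt z (g t) (Set.Icc 0 1) t)
    (hi : IntegrableOn g (Set.Icc (0:ℝ) 1)) :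
    ∫ t in Set.Icc (0:ℝ) 1, g t = z 1 - z 0 := by
  set cl : ℝ → ℝ := fun t => max 0 (min 1 t) with hcl
  have hclmem : ∀ t, cl t ∈ Set.Icc (0:ℝ) 1 :=
    fun t => ⟨le_max_left _ _, max_le zero_le_one (min_le_left _ _)⟩
  have hclid : ∀ t ∈ Set.Icc (0:ℝ) 1, cl t = t := by
    intro t ht
    simp only [hcl]
    rw [min_eq_right ht.2, max_eq_right ht.1]
  have habs : ∀ s t : ℝ, |z (cl t) - z (cl s)| ≤ (K:ℝ) * |t - s| := by
    intro s t
    have h1 : dist (z (cl t)) (z (cl s)) ≤ (K:ℝ) * dist (cl t) (cl s) :=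
      LipschitzOnWith.dist_le_mul hz _ (hclmem t) _ (hclmem s)
    have h2 : dist (cl t) (cl s) ≤ dist t s := by
      simp only [hcl, Real.dist_eq, max_comm (0:ℝ)]
      refine (abs_max_sub_max_le_abs _ _ 0).trans ?_
      refine (abs_min_sub_min_le_max 1 t 1 s).trans ?_
      simp [abs_nonneg]
    simp only [Real.dist_eq] at h1 h2
    calc |z (cl t) - z (cl s)| ≤ (K:ℝ) * |cl t - cl s| := h1
      _ ≤ (K:ℝ) * |t - s| := by
          refine mul_le_mul_of_nonneg_left ?_ K.coe_nonneg
          simpa [Real.dist_eq] using h2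
  -- the two monotone auxiliary functions
  have hzc_cont : Continuous (fun t => z (cl t)) := by
    have : Continuous cl := continuous_const.max (continuous_const.min continuous_id)
    exact hz.continuousOn.comp_continuous this hclmem
  have hIoo : ∀ᵐ t ∂(volume.restrict (Set.Icc (0:ℝ) 1)), t ∈ Set.Ioo (0:ℝ) 1 := by
    have h1 : ∀ᵐ t ∂(volume.restrict (Set.Icc (0:ℝ) 1)), t ∈ Set.Icc (0:ℝ) 1 :=
      ae_restrict_mem measurableSet_Icc
    have h0 : (volume : Measure ℝ) ({0, 1} : Set ℝ) = 0 :=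
      ((Set.finite_singleton 1).insert 0).measure_zero volume
    have h2 : ∀ᵐ t ∂(volume.restrict (Set.Icc (0:ℝ) 1)), t ∉ ({0, 1} : Set ℝ) :=
      ae_restrict_of_ae ((measure_eq_zero_iff_ae_notMem).mp h0)
    filter_upwards [h1, h2] with t ht hne
    simp only [Set.mem_insert_iff, Set.mem_singleton_iff, not_or] at hne
    exact ⟨lt_of_le_of_ne ht.1 (Ne.symm hne.1), lt_of_le_of_ne ht.2 hne.2⟩
  have hder : ∀ᵐ t ∂(volume.restrict (Set.Icc (0:ℝ) 1)),
      HasDerivAt (fun s => z (cl s)) (g t) t := by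
    filter_upwards [hae, hIoo] with t h1 h2
    have hnh : Set.Icc (0:ℝ) 1 ∈ nhds t := Icc_mem_nhds h2.1 h2.2
    have hd : HasDerivAt z (g t) t := h1.hasDerivAt hnh
    refine hd.congr_of_eventuallyEq ?_
    filter_upwards [hnh] with s hs
    rw [hclid s hs]
  have hmono1 : Monotone (fun t => (K:ℝ) * t + z (cl t)) := by
    intro s t hst
    have := (abs_le.mp (habs s t)).1
    have habs2 : |t - s| = t - s := abs_of_nonneg (sub_nonneg.mpr hst)
    rw [habs2] at this
    simp only
    nlinarith
  have hmono2 : Monotone (fun t => (K:ℝ) * t - z (cl t)) := by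
    intro s t hst
    have := (abs_le.mp (habs s t)).2
    have habs2 : |t - s| = t - s := abs_of_nonneg (sub_nonneg.mpr hst)
    rw [habs2] at this
    simp only
    nlinarith
  have hKder : ∀ t : ℝ, HasDerivAt (fun s => (K:ℝ) * s) (K:ℝ) t := by
    intro t
    simpa using (hasDerivAt_id t).const_mul (K:ℝ)
  have h1 := aux_monotone_integral_le hmono1
      ((continuous_const.mul continuous_id).add hzc_cont)
      (by filter_upwards [hder] with t ht; exact (hKder t).add ht)
  have h2 := aux_monotone_integral_le hmono2
      ((continuous_const.mul continuous_id).sub hzc_cont)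
      (by filter_upwards [hder] with t ht; exact (hKder t).sub ht)
  have hvol : ∫ t in Set.Icc (0:ℝ) 1, (K:ℝ) = (K:ℝ) := by
    rw [setIntegral_const]
    simp [Real.volume_Icc]
  have hadd : ∫ t in Set.Icc (0:ℝ) 1, ((K:ℝ) + g t) = (K:ℝ) + ∫ t in Set.Icc (0:ℝ) 1, g t := by
    rw [integral_add (integrable_const _) hi, hvol]
  have hsub : ∫ t in Set.Icc (0:ℝ) 1, ((K:ℝ) - g t) = (K:ℝ) - ∫ t in Set.Icc (0:ℝ) 1, g t := by
    rw [integral_sub (integrable_const _) hi, hvol]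
  have hcl0 : cl 0 = 0 := hclid 0 ⟨le_rfl, zero_le_one⟩
  have hcl1 : cl 1 = 1 := hclid 1 ⟨zero_le_one, le_rfl⟩
  rw [hadd] at h1
  rw [hsub] at h2
  simp only [hcl0, hcl1] at h1 h2
  have e1 : (K:ℝ) * 1 + z 1 - ((K:ℝ) * 0 + z 0) = (K:ℝ) + (z 1 - z 0) := by ring
  have e2 : (K:ℝ) * 1 - z 1 - ((K:ℝ) * 0 - z 0) = (K:ℝ) - (z 1 - z 0) := by ring
  rw [e1] at h1
  rw [e2] at h2
  linarith

/-- Derivative bound from a Lipschitz estimate. -/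
lemma aux_norm_deriv_le {E : Type*} [NormedAddCommGroup E] [NormedSpace ℝ E] {K : NNReal}
    {f : ℝ → E} (hf : LipschitzOnWith K f (Set.Icc 0 1)) {t : ℝ} (ht : t ∈ Set.Ioo (0:ℝ) 1)
    {d : E} (hd : HasDerivWithinAt f d (Set.Icc 0 1) t) : ‖d‖ ≤ (K:ℝ) := by
  have hne : (nhdsWithin t (Set.Icc (0:ℝ) 1 \ {t})).NeBot := by
    have h1 : Set.Ioo t 1 ⊆ Set.Icc (0:ℝ) 1 \ {t} := by
      intro s hs
      exact ⟨⟨(ht.1.trans hs.1).le, hs.2.le⟩, hs.1.ne'⟩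
    have h2 : (nhdsWithin t (Set.Ioo t 1)).NeBot := by
      refine mem_closure_iff_nhdsWithin_neBot.mp ?_
      rw [closure_Ioo ht.2.ne]
      exact ⟨le_rfl, ht.2.le⟩
    exact h2.mono (nhdsWithin_mono t h1)
  have hs := hasDerivWithinAt_iff_tendsto_slope.mp hd
  refine le_of_tendsto hs.norm ?_
  filter_upwards [self_mem_nhdsWithin] with s hs'
  have hmem : s ∈ Set.Icc (0:ℝ) 1 := hs'.1
  have hne' : s ≠ t := hs'.2
  rw [slope_def_module]
  rw [norm_smul]
  have hdist : ‖f s - f t‖ ≤ (K:ℝ) * ‖s - t‖ := by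
    have := LipschitzOnWith.dist_le_mul hf s hmem t ⟨ht.1.le, ht.2.le⟩
    simpa [dist_eq_norm] using this
  have hpos : (0:ℝ) < ‖s - t‖ := by
    simpa [norm_sub_eq_zero_iff] using norm_pos_iff.mpr (sub_ne_zero.mpr hne')
  calc ‖(s - t)⁻¹‖ * ‖f s - f t‖ ≤ ‖(s - t)⁻¹‖ * ((K:ℝ) * ‖s - t‖) := by
        exact mul_le_mul_of_nonneg_left hdist (norm_nonneg _)
    _ = (K:ℝ) := by
        rw [norm_inv, inv_mul_eq_div, mul_div_assoc, div_self hpos.ne', mul_one]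


lemma aux_ae_Ioo : ∀ᵐ t ∂(volume.restrict (Set.Icc (0:ℝ) 1)), t ∈ Set.Ioo (0:ℝ) 1 := by
  have h1 : ∀ᵐ t ∂(volume.restrict (Set.Icc (0:ℝ) 1)), t ∈ Set.Icc (0:ℝ) 1 :=
    ae_restrict_mem measurableSet_Icc
  have h0 : (volume : Measure ℝ) ({0, 1} : Set ℝ) = 0 :=
    ((Set.finite_singleton 1).insert 0).measure_zero volume
  have h2 : ∀ᵐ t ∂(volume.restrict (Set.Icc (0:ℝ) 1)), t ∉ ({0, 1} : Set ℝ) :=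
    ae_restrict_of_ae ((measure_eq_zero_iff_ae_notMem).mp h0)
  filter_upwards [h1, h2] with t ht hne
  simp only [Set.mem_insert_iff, Set.mem_singleton_iff, not_or] at hne
  exact ⟨lt_of_le_of_ne ht.1 (Ne.symm hne.1), lt_of_le_of_ne ht.2 hne.2⟩

lemma aux_key {E : Type*} [NormedAddCommGroup E] [NormedSpace ℝ E]
    (C : E → Set E) (F : E → E → ℝ)
    (hF_cont : ContinuousOn (fun p => F p.1 p.2) {p : E × E | p.2 ∈ C p.1})
    (hF_pos : ∀ x, ∀ v ∈ interior (C x), 0 < F x v)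
    (x : ℝ → E) (m : ℕ) (τ : Fin (m + 2) → ℝ)
    (hx : IsPiecewiseTimelike C x m τ)
    (z0 z1 : ℝ) (hzL : |z1 - z0| < piecewiseLength F x m τ) :
    ∃ w : ℝ → ℝ, IsProductTimelike C F x w ∧ w 0 = z0 ∧ w 1 = z1 := by
  obtain ⟨hτmono, hτ0, hτ1, hp⟩ := hx
  set L := piecewiseLength F x m τ with hLdef
  have hL0 : 0 < L := lt_of_le_of_lt (abs_nonneg _) hzL
  set c : ℝ := (z1 - z0) / L with hcdef
  have hc : |c| < 1 := by
    rw [hcdef, abs_div, abs_of_pos hL0]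
    exact (div_lt_one hL0).mpr hzL
  set a : Fin (m+1) → ℝ := fun i => τ i.castSucc with hadef
  set b : Fin (m+1) → ℝ := fun i => τ i.succ with hbdef
  have hab : ∀ i, a i < b i := fun i => hτmono (Fin.castSucc_lt_succ (i := i))
  have ha0 : ∀ i, 0 ≤ a i := by
    intro i
    have := hτmono.monotone (show (0 : Fin (m+2)) ≤ i.castSucc from Fin.zero_le _)
    rwa [hτ0] at this
  have hb1 : ∀ i, b i ≤ 1 := by
    intro i
    have := hτmono.monotone (show i.succ ≤ Fin.last (m+1) from Fin.le_last _)
    rwa [hτ1] at this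
  have horder : ∀ i j : Fin (m+1), i < j → b i ≤ a j := by
    intro i j hij
    refine hτmono.monotone ?_
    rw [Fin.le_def]
    simp only [Fin.val_succ, Fin.coe_castSucc]
    exact hij
  set D : Fin (m+1) → ℝ → E := fun i => derivWithin x (Set.Icc (a i) (b i)) with hDdef
  have hxC1 : ∀ i, ContDiffOn ℝ 1 x (Set.Icc (a i) (b i)) := fun i => (hp i).1
  have hDint : ∀ i, ∀ t ∈ Set.Icc (a i) (b i), D i t ∈ interior (C (x t)) := fun i => (hp i).2
  have hud : ∀ i, UniqueDiffOn ℝ (Set.Icc (a i) (b i)) := fun i => uniqueDiffOn_Icc (hab i)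
  have hDcont : ∀ i, ContinuousOn (D i) (Set.Icc (a i) (b i)) :=
    fun i => (hxC1 i).continuousOn_derivWithin (hud i) le_rfl
  have hhcont : ∀ i, ContinuousOn (fun t => F (x t) (D i t)) (Set.Icc (a i) (b i)) := by
    intro i
    have hpair : ContinuousOn (fun t => ((x t, D i t) : E × E)) (Set.Icc (a i) (b i)) :=
      ((hxC1 i).continuousOn).prodMk (hDcont i)
    refine hF_cont.comp hpair (fun t ht => ?_)
    exact (show D i t ∈ C (x t) from interior_subset (hDint i t ht))
  set cl : Fin (m+1) → ℝ → ℝ := fun i t => max (a i) (min (b i) t) with hcldef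
  have hclmem : ∀ i t, cl i t ∈ Set.Icc (a i) (b i) :=
    fun i t => ⟨le_max_left _ _, max_le (hab i).le (min_le_left _ _)⟩
  have hclid : ∀ i, ∀ t ∈ Set.Icc (a i) (b i), cl i t = t := by
    intro i t ht
    simp only [hcldef]
    rw [min_eq_right ht.2, max_eq_right ht.1]
  have hclcont : ∀ i, Continuous (cl i) :=
    fun i => continuous_const.max (continuous_const.min continuous_id)
  set g : Fin (m+1) → ℝ → ℝ := fun i t => F (x (cl i t)) (D i (cl i t)) with hgdef
  have hgcont : ∀ i, Continuous (g i) :=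
    fun i => (hhcont i).comp_continuous (hclcont i) (hclmem i)
  have hgeq : ∀ i, ∀ t ∈ Set.Icc (a i) (b i), g i t = F (x t) (D i t) := by
    intro i t ht
    simp only [hgdef, hclid i t ht]
  have hgpos : ∀ i, ∀ t ∈ Set.Icc (a i) (b i), 0 < F (x t) (D i t) :=
    fun i t ht => hF_pos _ _ (hDint i t ht)
  -- the full integral over each piece
  have hA : ∀ i, ∫ s in (a i)..(b i), g i s
      = ∫ t in Set.Icc (a i) (b i), F (x t) (D i t) := by
    intro i
    rw [intervalIntegral.integral_of_le (hab i).le, integral_Icc_eq_integral_Ioc]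
    refine setIntegral_congr_fun measurableSet_Ioc ?_
    intro t ht
    exact hgeq i t (Set.Ioc_subset_Icc_self ht)
  set W : ℝ → ℝ := fun t => ∑ i : Fin (m+1), ∫ s in (a i)..(cl i t), g i s with hWdef
  set w : ℝ → ℝ := fun t => z0 + c * W t with hwdef
  have hW0 : W 0 = 0 := by
    have hcl0 : ∀ i, cl i 0 = a i := by
      intro i
      simp only [hcldef]
      rw [min_eq_right (by linarith [hab i, ha0 i] : (0:ℝ) ≤ b i), max_eq_left (ha0 i)]
    simp [hWdef, hcl0, intervalIntegral.integral_same]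
  have hW1 : W 1 = L := by
    have hcl1 : ∀ i, cl i 1 = b i := by
      intro i
      simp only [hcldef]
      rw [min_eq_left (hb1 i), max_eq_right (hab i).le]
    rw [hLdef]
    simp only [hWdef, hcl1, piecewiseLength]
    exact Finset.sum_congr rfl (fun i _ => hA i)
  have hGderiv : ∀ i (t : ℝ), HasDerivAt (fun u => ∫ s in (a i)..u, g i s) (g i t) t :=
    fun i t => ((hgcont i).integral_hasStrictDerivAt (a i) t).hasDerivAt
  -- per-piece description of W
  have hWpiece : ∀ j : Fin (m+1), ∀ t ∈ Set.Icc (a j) (b j),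
      W t = (∑ i ∈ Finset.univ.erase j, if i < j then ∫ s in (a i)..(b i), g i s else 0)
        + ∫ s in (a j)..t, g j s := by
    intro j t ht
    rw [hWdef]
    simp only
    rw [← Finset.sum_erase_add _ _ (Finset.mem_univ j), hclid j t ht]
    congr 1
    refine Finset.sum_congr rfl ?_
    intro i hi
    have hij : i ≠ j := Finset.ne_of_mem_erase hi
    rcases lt_or_gt_of_ne hij with hlt | hgt
    · have h1 : b i ≤ t := (horder i j hlt).trans ht.1
      have : cl i t = b i := by
        simp only [hcldef]
        rw [min_eq_left (h1.trans' (le_refl _) |>.trans (le_refl _))]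
        · exact max_eq_right (hab i).le
      rw [this, if_pos hlt]
    · have h1 : t ≤ a i := ht.2.trans (horder j i hgt)
      have : cl i t = a i := by
        simp only [hcldef]
        rw [min_eq_right (h1.trans (hab i).le), max_eq_left h1]
      rw [this, if_neg (not_lt.mpr hgt.le), intervalIntegral.integral_same]
  -- smoothness of w on each piece and the derivative formula
  have hwC1 : ∀ j : Fin (m+1), ContDiffOn ℝ 1 w (Set.Icc (a j) (b j)) ∧
      ∀ t ∈ Set.Icc (a j) (b j),
        derivWithin w (Set.Icc (a j) (b j)) t = c * g j t := by
    intro j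
    set Kj : ℝ := ∑ i ∈ Finset.univ.erase j, if i < j then ∫ s in (a i)..(b i), g i s else 0
      with hKjdef
    set v : ℝ → ℝ := fun t => z0 + c * (Kj + ∫ s in (a j)..t, g j s) with hvdef
    have hvd : ∀ t : ℝ, HasDerivAt v (c * g j t) t := by
      intro t
      exact (((hGderiv j t).const_add Kj).const_mul c).const_add z0
    have hvC1 : ContDiff ℝ 1 v := by
      rw [contDiff_one_iff_deriv]
      constructor
      · exact fun t => (hvd t).differentiableAt
      · have : deriv v = fun t => c * g j t := funext fun t => (hvd t).deriv
        rw [this]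
        exact continuous_const.mul (hgcont j)
    have heq : Set.EqOn w v (Set.Icc (a j) (b j)) := by
      intro t ht
      rw [hwdef]
      simp only
      rw [hWpiece j t ht, hvdef]
    constructor
    · exact (hvC1.contDiffOn).congr heq
    · intro t ht
      rw [derivWithin_congr heq (heq ht)]
      exact ((hvd t).hasDerivWithinAt).derivWithin ((hud j) t ht)
  have hw0 : w 0 = z0 := by
    rw [hwdef]; simp [hW0]
  have hw1 : w 1 = z1 := by
    rw [hwdef]
    simp only [hW1, hcdef]
    field_simp
    ring
  refine ⟨w, ⟨m, τ, hτmono, hτ0, hτ1, ?_⟩, hw0, hw1⟩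
  intro i
  refine ⟨hxC1 i, (hwC1 i).1, ?_⟩
  intro t ht
  refine ⟨hDint i t ht, ?_⟩
  rw [(hwC1 i).2 t ht]
  have hg0 : g i t = F (x t) (D i t) := hgeq i t ht
  have hpos := hgpos i t ht
  rw [abs_mul, hg0, abs_of_pos hpos]
  calc |c| * F (x t) (D i t) < 1 * F (x t) (D i t) := by
        exact mul_lt_mul_of_pos_right hc hpos
    _ = F (x t) (D i t) := one_mul _

/-- **Projections of achronal causal curves of the product cone structure are
maximizers (Theorem 4.1, substantive direction, in the chart `M = ℝ^{n+1}`).**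
Let `C` be a continuous proper cone distribution on `ℝ^{n+1}` and `F` a fundamental
function with `F > 0` on `Int C`. Let `p, q` have finite Lorentz–Finsler distance `d`
(i.e. `d` is an upper bound for the lengths of causal curves from `p` to `q`, and for
every `R < d` there is a piecewise `C¹` timelike curve from `p` to `q` of length `> R`).
If `Γ = (γ, z)` is a continuous causal curve for `C^×` from `(p, z 0)` to `(q, z 1)`
which is achronal, then its projection `γ` is maximizing: `ℓ(γ) = d`. -/
theorem projection_of_achronal_is_maximizing
    {n : ℕ}
    (C : EuclideanSpace ℝ (Fin (n + 1)) → Set (EuclideanSpace ℝ (Fin (n + 1))))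
    -- `C` is a continuous proper cone distribution:
    (hC_zero : ∀ x, (0 : EuclideanSpace ℝ (Fin (n + 1))) ∉ C x)
    (hC_conv : ∀ x, Convex ℝ (insert (0 : EuclideanSpace ℝ (Fin (n + 1))) (C x)))
    (hC_smul : ∀ x, ∀ c : ℝ, 0 < c → ∀ v ∈ C x, c • v ∈ C x)
    (hC_closed : ∀ x, IsClosed (insert (0 : EuclideanSpace ℝ (Fin (n + 1))) (C x)))
    (hC_sharp : ∀ x, ∀ v ∈ C x, -v ∉ C x)
    (hC_int : ∀ x, (interior (C x)).Nonempty)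
    (hC_bundle_closed : ∀ p : EuclideanSpace ℝ (Fin (n + 1)) × EuclideanSpace ℝ (Fin (n + 1)),
      p.2 ≠ 0 → p ∈ closure {q : EuclideanSpace ℝ (Fin (n + 1)) ×
        EuclideanSpace ℝ (Fin (n + 1)) | q.2 ∈ C q.1} → p.2 ∈ C p.1)
    (hC_bundle_open : IsOpen {p : EuclideanSpace ℝ (Fin (n + 1)) ×
      EuclideanSpace ℝ (Fin (n + 1)) | p.2 ∈ interior (C p.1)})
    -- `F` is a fundamental function for `C`, positive on timelike vectors:
    (F : EuclideanSpace ℝ (Fin (n + 1)) → EuclideanSpace ℝ (Fin (n + 1)) → ℝ)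
    (hF_cont : ContinuousOn (fun p => F p.1 p.2)
      {p : EuclideanSpace ℝ (Fin (n + 1)) × EuclideanSpace ℝ (Fin (n + 1)) | p.2 ∈ C p.1})
    (hF_nonneg : ∀ x, ∀ v ∈ C x, 0 ≤ F x v)
    (hF_hom : ∀ x, ∀ c : ℝ, 0 < c → ∀ v ∈ C x, F x (c • v) = c * F x v)
    (hF_conc : ∀ x, ∀ v ∈ C x, ∀ w ∈ C x, ∀ s : ℝ, 0 ≤ s → s ≤ 1 →
      s * F x v + (1 - s) * F x w ≤ F x (s • v + (1 - s) • w))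
    (hF_ne : ∀ x, ∃ v ∈ C x, F x v ≠ 0)
    (hF_pos : ∀ x, ∀ v ∈ interior (C x), 0 < F x v)
    -- `p`, `q` and their (finite) Lorentz–Finsler distance `d`:
    (p q : EuclideanSpace ℝ (Fin (n + 1))) (d : ℝ)
    (hd_ub : ∀ (σ : ℝ → EuclideanSpace ℝ (Fin (n + 1))) (a b : ℝ), a ≤ b →
      IsCausalCurve C σ a b → σ a = p → σ b = q → curveLength F σ a b ≤ d)
    (hd_approx : ∀ R < d, ∃ (x : ℝ → EuclideanSpace ℝ (Fin (n + 1)))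
      (m : ℕ) (τ : Fin (m + 2) → ℝ), IsPiecewiseTimelike C x m τ ∧
        x 0 = p ∧ x 1 = q ∧ R < piecewiseLength F x m τ)
    -- `Γ = (γ, z)` is a continuous causal curve for the product cone structure `C^×`:
    (γ : ℝ → EuclideanSpace ℝ (Fin (n + 1))) (z : ℝ → ℝ)
    (hΓ_lip : ∃ K : NNReal, LipschitzOnWith K (fun t => (γ t, z t)) (Set.Icc 0 1))
    (hγ0 : γ 0 = p) (hγ1 : γ 1 = q)
    (hΓ_causal : ∀ᵐ t ∂(volume.restrict (Set.Icc (0 : ℝ) 1)),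
      HasDerivWithinAt γ (derivWithin γ (Set.Icc 0 1) t) (Set.Icc 0 1) t ∧
      HasDerivWithinAt z (derivWithin z (Set.Icc 0 1) t) (Set.Icc 0 1) t ∧
      derivWithin γ (Set.Icc 0 1) t ∈ C (γ t) ∧
      |derivWithin z (Set.Icc 0 1) t| ≤ F (γ t) (derivWithin γ (Set.Icc 0 1) t))
    -- `Γ` is achronal: no product timelike curve has both endpoints on the image of `Γ`:
    (hΓ_achronal : ¬ ∃ (lam : ℝ → EuclideanSpace ℝ (Fin (n + 1))) (w : ℝ → ℝ),
      IsProductTimelike C F lam w ∧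
      (∃ s₁ ∈ Set.Icc (0 : ℝ) 1, lam 0 = γ s₁ ∧ w 0 = z s₁) ∧
      (∃ s₂ ∈ Set.Icc (0 : ℝ) 1, lam 1 = γ s₂ ∧ w 1 = z s₂)) :
    curveLength F γ 0 1 = d := by
  
  classical
  obtain ⟨K, hKlip⟩ := hΓ_lip
  -- Lipschitz bounds for the components
  have hγlip : LipschitzOnWith K γ (Set.Icc (0:ℝ) 1) := by
    intro s hs t ht
    have h := hKlip hs ht
    simp only [Prod.edist_eq] at h
    exact le_trans (le_max_left _ _) h
  have hzlip : LipschitzOnWith K z (Set.Icc (0:ℝ) 1) := by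
    intro s hs t ht
    have h := hKlip hs ht
    simp only [Prod.edist_eq] at h
    exact le_trans (le_max_right _ _) h
  set Dγ : ℝ → (EuclideanSpace ℝ (Fin (n + 1))) := derivWithin γ (Set.Icc (0:ℝ) 1) with hDγ
  set Dz : ℝ → ℝ := derivWithin z (Set.Icc (0:ℝ) 1) with hDz
  set S : Set ((EuclideanSpace ℝ (Fin (n + 1))) × (EuclideanSpace ℝ (Fin (n + 1)))) := {p | p.2 ∈ C p.1} with hS
  have hS_meas : MeasurableSet S := by
    have hSeq : S = closure S \ {p : (EuclideanSpace ℝ (Fin (n + 1))) × (EuclideanSpace ℝ (Fin (n + 1))) | p.2 = 0} := by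
      apply Set.Subset.antisymm
      · intro p hp
        exact ⟨subset_closure hp, fun h0 => hC_zero p.1 (h0 ▸ hp)⟩
      · rintro p ⟨hcl, hne⟩
        exact hC_bundle_closed p hne hcl
    rw [hSeq]
    exact isClosed_closure.measurableSet.diff
      ((isClosed_eq continuous_snd continuous_const).measurableSet)
  have hγcont : ContinuousOn γ (Set.Icc (0:ℝ) 1) := hγlip.continuousOn
  have hγim : IsCompact (γ '' Set.Icc (0:ℝ) 1) :=
    isCompact_Icc.image_of_continuousOn hγcont
  -- a compact set of unit timelike covectors over the curve, and a bound for F on it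
  set Kc : Set ((EuclideanSpace ℝ (Fin (n + 1))) × (EuclideanSpace ℝ (Fin (n + 1)))) := {p | p.1 ∈ γ '' Set.Icc (0:ℝ) 1 ∧ p.2 ∈ C p.1 ∧ ‖p.2‖ = 1}
    with hKc
  have hKc_eq : Kc = ({p : (EuclideanSpace ℝ (Fin (n + 1))) × (EuclideanSpace ℝ (Fin (n + 1))) | p.1 ∈ γ '' Set.Icc (0:ℝ) 1} ∩ closure S)
      ∩ {p : (EuclideanSpace ℝ (Fin (n + 1))) × (EuclideanSpace ℝ (Fin (n + 1))) | ‖p.2‖ = 1} := by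
    ext p
    constructor
    · rintro ⟨h1, h2, h3⟩
      exact ⟨⟨h1, subset_closure h2⟩, h3⟩
    · rintro ⟨⟨h1, h2⟩, h3⟩
      refine ⟨h1, hC_bundle_closed p ?_ h2, h3⟩
      intro h0
      rw [Set.mem_setOf_eq, h0] at h3
      simp at h3
  have hKc_closed : IsClosed Kc := by
    rw [hKc_eq]
    exact ((hγim.isClosed.preimage continuous_fst).inter isClosed_closure).inter
      (isClosed_eq continuous_snd.norm continuous_const)
  have hKc_bdd : Bornology.IsBounded Kc := by
    refine (hγim.isBounded.prod (Metric.isBounded_closedBall (x := (0:(EuclideanSpace ℝ (Fin (n + 1))))) (r := 1))).subset ?_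
    rintro p ⟨h1, _, h3⟩
    exact ⟨h1, by simp [mem_closedBall_zero_iff, h3.le]⟩
  have hKc_cpt : IsCompact Kc := Metric.isCompact_of_isClosed_isBounded hKc_closed hKc_bdd
  obtain ⟨M, hM⟩ := hKc_cpt.exists_bound_of_continuousOn
    (hF_cont.mono (fun p hp => hp.2.1))
  set M' : ℝ := max M 0 with hM'
  -- almost-everywhere facts
  have hIoo := aux_ae_Ioo
  have hIcc : ∀ᵐ t ∂(volume.restrict (Set.Icc (0:ℝ) 1)), t ∈ Set.Icc (0:ℝ) 1 :=
    ae_restrict_mem measurableSet_Icc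
  have hae_pack : ∀ᵐ t ∂(volume.restrict (Set.Icc (0:ℝ) 1)),
      Dγ t ∈ C (γ t) ∧ |Dz t| ≤ F (γ t) (Dγ t) ∧ deriv γ t = Dγ t ∧ deriv z t = Dz t ∧
      0 ≤ F (γ t) (Dγ t) ∧ F (γ t) (Dγ t) ≤ (K:ℝ) * M' := by
    filter_upwards [hΓ_causal, hIoo, hIcc] with t hcaus htIoo htIcc
    obtain ⟨hγd, hzd, hmem, hzb⟩ := hcaus
    have hnh : Set.Icc (0:ℝ) 1 ∈ nhds t := Icc_mem_nhds htIoo.1 htIoo.2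
    have hγd' : HasDerivAt γ (Dγ t) t := hγd.hasDerivAt hnh
    have hzd' : HasDerivAt z (Dz t) t := hzd.hasDerivAt hnh
    refine ⟨hmem, hzb, hγd'.deriv, hzd'.deriv, hF_nonneg _ _ hmem, ?_⟩
    -- the bound on F via the compact set of unit vectors
    set v : (EuclideanSpace ℝ (Fin (n + 1))) := Dγ t with hv
    have hvC : v ∈ C (γ t) := hmem
    have hvne : v ≠ 0 := fun h => hC_zero (γ t) (h ▸ hvC)
    have hnv : (0:ℝ) < ‖v‖ := norm_pos_iff.mpr hvne
    set u : (EuclideanSpace ℝ (Fin (n + 1))) := ‖v‖⁻¹ • v with hu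
    have huC : u ∈ C (γ t) := hC_smul _ _ (inv_pos.mpr hnv) v hvC
    have hunorm : ‖u‖ = 1 := by
      rw [hu, norm_smul, norm_inv, norm_norm, inv_mul_cancel₀ hnv.ne']
    have hFu0 : 0 ≤ F (γ t) u := hF_nonneg _ _ huC
    have hFu : F (γ t) u ≤ M' := by
      refine le_trans (le_trans (le_abs_self _) ?_) (le_max_left M 0)
      exact hM ((γ t, u)) ⟨⟨t, htIcc, rfl⟩, huC, hunorm⟩
    have hvu : ‖v‖ • u = v := by
      rw [hu, smul_smul, mul_inv_cancel₀ hnv.ne', one_smul]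
    have hFv : F (γ t) v = ‖v‖ * F (γ t) u := by
      conv_lhs => rw [← hvu]
      rw [hF_hom (γ t) ‖v‖ hnv u huC]
    have hnvK : ‖v‖ ≤ (K:ℝ) := aux_norm_deriv_le hγlip htIoo hγd
    rw [hFv]
    exact mul_le_mul hnvK hFu hFu0 K.coe_nonneg
  -- measurability and integrability of the integrands
  have hΦae : AEMeasurable (fun t => ((γ t, deriv γ t) : (EuclideanSpace ℝ (Fin (n + 1))) × (EuclideanSpace ℝ (Fin (n + 1)))))
      (volume.restrict (Set.Icc (0:ℝ) 1)) :=
    (hγcont.aemeasurable measurableSet_Icc).prodMk (measurable_deriv γ).aemeasurable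
  have hmemae : ∀ᵐ t ∂(volume.restrict (Set.Icc (0:ℝ) 1)),
      ((γ t, deriv γ t) : (EuclideanSpace ℝ (Fin (n + 1))) × (EuclideanSpace ℝ (Fin (n + 1)))) ∈ S := by
    filter_upwards [hae_pack] with t ht
    show deriv γ t ∈ C (γ t)
    rw [ht.2.2.1]
    exact ht.1
  have hFmap : AEStronglyMeasurable (fun p : (EuclideanSpace ℝ (Fin (n + 1))) × (EuclideanSpace ℝ (Fin (n + 1))) => F p.1 p.2)
      ((volume.restrict (Set.Icc (0:ℝ) 1)).map (fun t => ((γ t, deriv γ t) : (EuclideanSpace ℝ (Fin (n + 1))) × (EuclideanSpace ℝ (Fin (n + 1)))))) := by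
    have hmm : ∀ᵐ (y : (EuclideanSpace ℝ (Fin (n + 1))) × (EuclideanSpace ℝ (Fin (n + 1))))
        ∂((volume.restrict (Set.Icc (0:ℝ) 1)).map
          (fun t => ((γ t, deriv γ t) : (EuclideanSpace ℝ (Fin (n + 1))) × (EuclideanSpace ℝ (Fin (n + 1)))))),
        y ∈ S := (MeasureTheory.ae_map_iff hΦae hS_meas).mpr hmemae
    have h3 : ((volume.restrict (Set.Icc (0:ℝ) 1)).map
          (fun t => ((γ t, deriv γ t) : (EuclideanSpace ℝ (Fin (n + 1))) × (EuclideanSpace ℝ (Fin (n + 1)))))).restrict S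
        = (volume.restrict (Set.Icc (0:ℝ) 1)).map
          (fun t => ((γ t, deriv γ t) : (EuclideanSpace ℝ (Fin (n + 1))) × (EuclideanSpace ℝ (Fin (n + 1))))) :=
      Measure.restrict_eq_self_of_ae_mem hmm
    have h2 := hF_cont.aestronglyMeasurable hS_meas
      (μ := (volume.restrict (Set.Icc (0:ℝ) 1)).map (fun t => ((γ t, deriv γ t) : (EuclideanSpace ℝ (Fin (n + 1))) × (EuclideanSpace ℝ (Fin (n + 1))))))
    rwa [h3] at h2
  have hF'sm : AEStronglyMeasurable (fun t => F (γ t) (deriv γ t))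
      (volume.restrict (Set.Icc (0:ℝ) 1)) := hFmap.comp_aemeasurable hΦae
  have hF0sm : AEStronglyMeasurable (fun t => F (γ t) (Dγ t))
      (volume.restrict (Set.Icc (0:ℝ) 1)) := by
    refine hF'sm.congr ?_
    filter_upwards [hae_pack] with t ht
    rw [ht.2.2.1]
  have hFint : IntegrableOn (fun t => F (γ t) (Dγ t)) (Set.Icc (0:ℝ) 1) := by
    refine Integrable.mono' (integrable_const ((K:ℝ) * M')) hF0sm ?_
    filter_upwards [hae_pack] with t ht
    rw [Real.norm_eq_abs, abs_of_nonneg ht.2.2.2.2.1]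
    exact ht.2.2.2.2.2
  have hzsm : AEStronglyMeasurable Dz (volume.restrict (Set.Icc (0:ℝ) 1)) := by
    refine ((measurable_deriv z).aestronglyMeasurable).congr ?_
    filter_upwards [hae_pack] with t ht
    exact ht.2.2.2.1
  have hzint : IntegrableOn Dz (Set.Icc (0:ℝ) 1) := by
    refine Integrable.mono' hFint hzsm ?_
    filter_upwards [hae_pack] with t ht
    rw [Real.norm_eq_abs]
    exact ht.2.1
  -- fundamental theorem of calculus for `z`
  have hFTC : ∫ t in Set.Icc (0:ℝ) 1, Dz t = z 1 - z 0 := by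
    refine aux_lip_integral_eq hzlip ?_ hzint
    filter_upwards [hΓ_causal] with t ht
    exact ht.2.1
  have habs : |z 1 - z 0| ≤ curveLength F γ 0 1 := by
    rw [← hFTC]
    have h1 : |∫ t in Set.Icc (0:ℝ) 1, Dz t| ≤ ∫ t in Set.Icc (0:ℝ) 1, |Dz t| := by
      simpa [Real.norm_eq_abs] using
        norm_integral_le_integral_norm (μ := volume.restrict (Set.Icc (0:ℝ) 1)) Dz
    refine h1.trans ?_
    refine integral_mono_ae hzint.abs hFint ?_
    filter_upwards [hae_pack] with t ht
    exact ht.2.1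
  -- the length of γ is at most d
  have hld : curveLength F γ 0 1 ≤ d := by
    refine hd_ub γ 0 1 zero_le_one ⟨⟨K, hγlip⟩, ?_⟩ hγ0 hγ1
    filter_upwards [hΓ_causal] with t ht
    exact ⟨ht.1, ht.2.2.1⟩
  -- achronality forces every timelike curve from p to q to be short
  have hkey : ∀ (x : ℝ → (EuclideanSpace ℝ (Fin (n + 1)))) (m : ℕ) (τ : Fin (m + 2) → ℝ),
      IsPiecewiseTimelike C x m τ → x 0 = p → x 1 = q →
      piecewiseLength F x m τ ≤ |z 1 - z 0| := by
    intro x m τ hx hx0 hx1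
    by_contra hL
    push_neg at hL
    obtain ⟨w, hw, hw0, hw1⟩ := aux_key C F hF_cont hF_pos x m τ hx (z 0) (z 1) hL
    exact hΓ_achronal ⟨x, w, hw,
      ⟨0, ⟨le_rfl, zero_le_one⟩, by rw [hx0, hγ0], hw0⟩,
      ⟨1, ⟨zero_le_one, le_rfl⟩, by rw [hx1, hγ1], hw1⟩⟩
  have hdz : d ≤ |z 1 - z 0| := by
    by_contra h
    push_neg at h
    obtain ⟨x, m, τ, hx, hx0, hx1, hR⟩ := hd_approx _ h
    exact absurd (hkey x m τ hx hx0 hx1) (not_le.mpr hR)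
  exact le_antisymm hld (hdz.trans habs)
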